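/- arXiv:2410.02124 — 3 statements merged into one kernel-verified Lean document; each statement's English description precedes it below -/
import Mathlib

section
/- Let G be a finite connected simple graph with minimum degree at least c, where c ≥ 6, and let ρ be a rotation system on G. Let g be the genus of (G,ρ), let v⁺ = |V(G)| − (c+1) (the vertex excess), and let f⁺ = Σ_{faces F} (length(F) − 3) (the face excess). Then g ≥ ⌈((c−2)(c−3) + (c−6)·v⁺ + 2·f⁺)/12⌉, where the fraction is a rational number and ⌈·⌉ is the ceiling. -/
namespace DualSep

open SimpleGraph

variable {V : Type*} [Fintype V] [DecidableEq V]

/-- The dart-reversal permutation of a simple graph. -/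
def dartRev (G : SimpleGraph V) : Equiv.Perm G.Dart :=
  Function.Involutive.toPerm SimpleGraph.Dart.symm SimpleGraph.Dart.symm_involutive

/-- `ρ` is a rotation system on `G`: it permutes the darts, preserves the initial vertex of
each dart, and the darts leaving any fixed vertex form a single orbit. -/
structure IsRotationSystem (G : SimpleGraph V) (ρ : Equiv.Perm G.Dart) : Prop where
  fst_fixed : ∀ d : G.Dart, (ρ d).fst = d.fst
  single_orbit : ∀ d d' : G.Dart, d.fst = d'.fst → ∃ n : ℕ, (ρ ^ n) d = d'

/-- The face permutation `φ = ρ ∘ rev` of a rotation system. -/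
def facePerm {G : SimpleGraph V} (ρ : Equiv.Perm G.Dart) : Equiv.Perm G.Dart :=
  ρ * dartRev G

/-- The face (orbit of the face permutation) containing a given dart. -/
def faceOf {G : SimpleGraph V} (ρ : Equiv.Perm G.Dart) (d : G.Dart) : Set G.Dart :=
  {d' | (facePerm ρ).SameCycle d d'}

/-- The set of faces of `(G, ρ)`. -/
def faces {G : SimpleGraph V} (ρ : Equiv.Perm G.Dart) : Set (Set G.Dart) :=
  Set.range (faceOf ρ)

/-- The dual graph is simple: no dual edge joins a face to itself, and no two distinct
faces are joined by more than one dual edge. -/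
def DualSimple {G : SimpleGraph V} (ρ : Equiv.Perm G.Dart) : Prop :=
  (∀ d : G.Dart, faceOf ρ d ≠ faceOf ρ d.symm) ∧
  (∀ d d' : G.Dart, d.edge ≠ d'.edge →
    ¬(faceOf ρ d = faceOf ρ d' ∧ faceOf ρ d.symm = faceOf ρ d'.symm) ∧
    ¬(faceOf ρ d = faceOf ρ d'.symm ∧ faceOf ρ d.symm = faceOf ρ d'))

/-- The dual graph of `(G, ρ)`, as a simple graph on the set of faces: two distinct faces
are adjacent when some edge of `G` induces a dual edge between them. -/
def dualGraph {G : SimpleGraph V} (ρ : Equiv.Perm G.Dart) : SimpleGraph (faces ρ) where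
  Adj F₁ F₂ := F₁ ≠ F₂ ∧
    ∃ d : G.Dart, faceOf ρ d = (F₁ : Set G.Dart) ∧ faceOf ρ d.symm = (F₂ : Set G.Dart)
  symm := ⟨by
    rintro F₁ F₂ ⟨hne, d, h1, h2⟩
    exact ⟨hne.symm, d.symm, h2, by rwa [SimpleGraph.Dart.symm_symm]⟩⟩
  loopless := ⟨by rintro F ⟨hne, -⟩; exact hne rfl⟩

/-- `C` is a cutface: a face whose removal disconnects the dual graph. -/
def IsCutface {G : SimpleGraph V} (ρ : Equiv.Perm G.Dart) (C : Set G.Dart) : Prop :=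
  C ∈ faces ρ ∧
    ¬((dualGraph ρ).induce {F : faces ρ | (F : Set G.Dart) ≠ C}).Connected

end DualSep



section Aux
open DualSep

private lemma faceOf_eq_iff' {V : Type*} [Fintype V] [DecidableEq V] {G : SimpleGraph V}
    (ρ : Equiv.Perm G.Dart) (d d' : G.Dart) :
    faceOf ρ d = faceOf ρ d' ↔ (facePerm ρ).SameCycle d' d := by
  constructor
  · intro h
    have hd : d ∈ faceOf ρ d := Equiv.Perm.SameCycle.refl _ _
    rw [h] at hd
    exact hd
  · intro h
    ext x
    simp only [faceOf, Set.mem_setOf_eq]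
    exact ⟨fun hx => h.trans hx, fun hx => h.symm.trans hx⟩

end Aux

open DualSep in
/-- Lemma 2 of Brinkmann–Noguchi–Van den Camp: Euler-formula lower bound on the genus in
terms of the vertex excess `|V| - (c+1)` and face excess `∑_F (length F - 3)`. -/
theorem stmt0 {V : Type*} [Fintype V] [DecidableEq V] (G : SimpleGraph V)
    (hconn : G.Connected) (c : ℕ) (hc : 6 ≤ c)
    (hdeg : ∀ v : V, c ≤ (G.neighborSet v).ncard)
    (ρ : Equiv.Perm G.Dart) (hρ : IsRotationSystem G ρ)
    (g : ℤ)
    (hEuler : (Fintype.card V : ℤ) - (G.edgeSet.ncard : ℤ) + ((faces ρ).ncard : ℤ)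
      = 2 - 2 * g) :
    g ≥ ⌈(((c : ℚ) - 2) * ((c : ℚ) - 3)
          + ((c : ℚ) - 6) * ((Fintype.card V : ℚ) - ((c : ℚ) + 1))
          + 2 * ∑ᶠ F ∈ faces ρ, ((F.ncard : ℚ) - 3)) / 12⌉ := by
  
  classical
  rw [ge_iff_le, Int.ceil_le]
  -- notation
  set n := Fintype.card V with hn
  -- edge count
  have hm : G.edgeSet.ncard = G.edgeFinset.card := by
    rw [← SimpleGraph.coe_edgeFinset, Set.ncard_coe_finset]
  -- faces as a finset
  set Fs : Finset (Set G.Dart) := Finset.univ.image (faceOf ρ) with hFs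
  have hfaces_eq : faces ρ = ↑Fs := by
    rw [hFs, Finset.coe_image, Finset.coe_univ, Set.image_univ]; rfl
  have hfcard : (faces ρ).ncard = Fs.card := by
    rw [hfaces_eq, Set.ncard_coe_finset]
  -- fibers of faceOf are the faces themselves
  have hfibers : ∀ F ∈ Fs, (Finset.univ.filter (fun d => faceOf ρ d = F)).card = F.ncard := by
    intro F hF
    obtain ⟨d₀, -, rfl⟩ := Finset.mem_image.mp hF
    have hset : (↑(Finset.univ.filter (fun d => faceOf ρ d = faceOf ρ d₀)) : Set G.Dart)
        = faceOf ρ d₀ := by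
      ext d
      simp only [Finset.coe_filter, Finset.mem_univ, true_and, Set.mem_setOf_eq,
        faceOf_eq_iff']
      exact Iff.rfl
    rw [← Set.ncard_coe_finset, hset]
  have hcard : ∑ F ∈ Fs, F.ncard = Fintype.card G.Dart := by
    rw [← Finset.card_univ, Finset.card_eq_sum_card_image (faceOf ρ) Finset.univ]
    exact Finset.sum_congr rfl (fun F hF => (hfibers F hF).symm)
  have hdart : Fintype.card G.Dart = 2 * G.edgeFinset.card :=
    SimpleGraph.dart_card_eq_twice_card_edges G
  -- sum of face lengths
  have hS : (∑ᶠ F ∈ faces ρ, ((F.ncard : ℚ) - 3))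
      = 2 * (G.edgeSet.ncard : ℚ) - 3 * ((faces ρ).ncard : ℚ) := by
    rw [hfaces_eq, finsum_mem_coe_finset, Finset.sum_sub_distrib, Finset.sum_const,
      ← Nat.cast_sum, hcard, hdart, hm, Set.ncard_coe_finset, nsmul_eq_mul]
    push_cast
    ring
  -- degree bound
  have hdeg2 : c * n ≤ 2 * G.edgeSet.ncard := by
    rw [hm, ← SimpleGraph.sum_degrees_eq_twice_card_edges]
    calc c * n = ∑ _v : V, c := by simp [Finset.sum_const, Finset.card_univ, mul_comm, hn]
    _ ≤ ∑ v : V, G.degree v := Finset.sum_le_sum (fun v _ => by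
        have := hdeg v
        rwa [SimpleGraph.degree, SimpleGraph.neighborFinset_def,
          ← Set.ncard_eq_toFinset_card'])
  have hdegQ : (c : ℚ) * (n : ℚ) ≤ 2 * (G.edgeSet.ncard : ℚ) := by exact_mod_cast hdeg2
  have hEQ : (n : ℚ) - (G.edgeSet.ncard : ℚ) + ((faces ρ).ncard : ℚ) = 2 - 2 * (g : ℚ) := by
    exact_mod_cast hEuler
  have key : ((c : ℚ) - 2) * ((c : ℚ) - 3) + ((c : ℚ) - 6) * ((n : ℚ) - ((c : ℚ) + 1))
      = ((c : ℚ) * (n : ℚ) - 6 * (n : ℚ)) + 12 := by ring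
  rw [hS, key]
  linarith
end

section
/- Let n ≥ 9 and let ρ be a rotation system on the complete graph K_n whose dual graph is simple and which has a cutface C. Then the length of the face C is at least 15. -/
namespace DualSepProof

open DualSep SimpleGraph
open scoped Classical

variable {n : ℕ}

/-- abbreviation for darts of the complete graph -/
abbrev D (n : ℕ) := (⊤ : SimpleGraph (Fin n)).Dart

variable (ρ : Equiv.Perm (D n))

lemma facePerm_apply (d : D n) : facePerm ρ d = ρ d.symm := rfl

lemma dart_fst_ne_snd (d : D n) : d.fst ≠ d.snd := d.adj.ne

lemma dart_ext {d e : D n} (h1 : d.fst = e.fst) (h2 : d.snd = e.snd) : d = e := by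
  cases d; cases e; simp_all [SimpleGraph.Dart.ext_iff, Prod.ext_iff]

lemma symm_ne (d : D n) : d.symm ≠ d := by
  intro h
  have : d.symm.fst = d.fst := by rw [h]
  exact dart_fst_ne_snd d (by simpa using this.symm)

variable {ρ}

lemma fst_facePerm (hρ : IsRotationSystem ⊤ ρ) (d : D n) : (facePerm ρ d).fst = d.snd := by
  rw [facePerm_apply]; exact (hρ.fst_fixed d.symm).trans rfl

lemma facePerm_ne (hρ : IsRotationSystem ⊤ ρ) (d : D n) : facePerm ρ d ≠ d := by
  intro h
  have h2 := fst_facePerm hρ d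
  rw [h] at h2
  exact dart_fst_ne_snd d h2

/-! ### faceOf API -/

lemma mem_faceOf {d d' : D n} : d' ∈ faceOf ρ d ↔ (facePerm ρ).SameCycle d d' := Iff.rfl

lemma self_mem_faceOf (d : D n) : d ∈ faceOf ρ d := Equiv.Perm.SameCycle.refl _ _

lemma faceOf_eq_of_mem {d d' : D n} (h : d' ∈ faceOf ρ d) : faceOf ρ d' = faceOf ρ d := by
  ext e
  exact ⟨fun he => (mem_faceOf.1 h).trans he, fun he => (mem_faceOf.1 h).symm.trans he⟩

lemma faceOf_eq_iff {d d' : D n} :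
    faceOf ρ d = faceOf ρ d' ↔ (facePerm ρ).SameCycle d d' := by
  constructor
  · intro h
    have : d' ∈ faceOf ρ d := h ▸ self_mem_faceOf d'
    exact mem_faceOf.1 this
  · intro h
    exact (faceOf_eq_of_mem (mem_faceOf.2 h)).symm

lemma mem_faceOf_iff_faceOf_eq {d d' : D n} : d' ∈ faceOf ρ d ↔ faceOf ρ d' = faceOf ρ d :=
  ⟨fun h => faceOf_eq_of_mem h, fun h => mem_faceOf.2 (faceOf_eq_iff.1 h).symm⟩

lemma faceOf_facePerm (d : D n) : faceOf ρ (facePerm ρ d) = faceOf ρ d :=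
  faceOf_eq_of_mem (mem_faceOf.2 ⟨1, by simp⟩)

lemma faceOf_facePerm_pow (k : ℕ) (d : D n) : faceOf ρ ((facePerm ρ ^ k) d) = faceOf ρ d :=
  faceOf_eq_of_mem (mem_faceOf.2 ⟨(k : ℤ), by simp [zpow_natCast]⟩)

/-- The key local identity: the face of `ρ d` is the face on the other side of `d`. -/
lemma faceOf_rho (d : D n) : faceOf ρ (ρ d) = faceOf ρ d.symm := by
  have h : ρ d = facePerm ρ d.symm := by
    rw [facePerm_apply, SimpleGraph.Dart.symm_symm]
  rw [h, faceOf_facePerm]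

/-! ### consequences of DualSimple -/

variable (hs : DualSimple ρ)

/-- Two darts whose faces agree on both sides are equal. -/
lemma eq_of_shared (hs : DualSimple ρ) {d d' : D n}
    (h1 : faceOf ρ d = faceOf ρ d') (h2 : faceOf ρ d.symm = faceOf ρ d'.symm) : d = d' := by
  by_cases he : d.edge = d'.edge
  · rcases (SimpleGraph.dart_edge_eq_iff d d').1 he with h | h
    · exact h
    · exfalso
      apply hs.1 d'
      rw [← h1, h, ← h2, h, SimpleGraph.Dart.symm_symm]
  · exact absurd ⟨h1, h2⟩ (hs.2 d d' he).1

lemma not_both_in_C (hs : DualSimple ρ) {d : D n} {C : Set (D n)}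
    (h1 : faceOf ρ d = C) (h2 : faceOf ρ d.symm = C) : False :=
  hs.1 d (h1.trans h2.symm)

lemma facePerm_sq_ne (hρ : IsRotationSystem ⊤ ρ) (hs : DualSimple ρ) (d : D n) :
    facePerm ρ (facePerm ρ d) ≠ d := by
  intro h
  have h1 : (facePerm ρ d).fst = d.snd := fst_facePerm hρ d
  have h2 : (facePerm ρ d).snd = d.fst := by
    have := fst_facePerm hρ (facePerm ρ d)
    rw [h] at this
    exact this.symm
  have h3 : facePerm ρ d = d.symm := dart_ext (by simpa using h1) (by simpa using h2)
  apply hs.1 d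
  rw [← h3, faceOf_facePerm]

/-- every face has at least three darts: `φ d`, `φ² d` differ from `d`. -/
lemma facePerm_pow_lemmas (hρ : IsRotationSystem ⊤ ρ) (hs : DualSimple ρ) (d : D n) :
    facePerm ρ d ≠ d ∧ facePerm ρ (facePerm ρ d) ≠ d ∧ facePerm ρ (facePerm ρ d) ≠ facePerm ρ d :=
  ⟨facePerm_ne hρ d, facePerm_sq_ne hρ hs d, fun h => facePerm_ne hρ (facePerm ρ d) h⟩

/-! ### the orbit-transition lemma -/

lemma fst_rho_pow (hρ : IsRotationSystem ⊤ ρ) (k : ℕ) (d : D n) : ((ρ ^ k) d).fst = d.fst := by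
  induction k with
  | zero => rfl
  | succ k ih =>
    rw [pow_succ', Equiv.Perm.mul_apply]
    rw [hρ.fst_fixed ((ρ ^ k) d)]
    exact ih

/-- If a property of darts at `v` is preserved by the rotation `ρ`, it propagates to all
darts at `v`. -/
lemma orbit_closed (hρ : IsRotationSystem ⊤ ρ) {P : D n → Prop} {v : Fin n}
    (hstep : ∀ d : D n, d.fst = v → P d → P (ρ d))
    {d₀ d₁ : D n} (h0 : d₀.fst = v) (h1 : d₁.fst = v) (hP : P d₀) : P d₁ := by
  obtain ⟨k, hk⟩ := hρ.single_orbit d₀ d₁ (h0.trans h1.symm)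
  subst hk
  clear h1
  induction k with
  | zero => exact hP
  | succ k ih =>
    rw [pow_succ', Equiv.Perm.mul_apply]
    exact hstep _ ((fst_rho_pow hρ k d₀).trans h0) ih

/-! ### classes of faces in the dual minus C -/

variable (ρ) (C : Set (D n))

/-- one step between two non-C faces sharing an edge -/
def StepNC (F F' : Set (D n)) : Prop :=
  F ≠ C ∧ F' ≠ C ∧ ∃ d : D n, faceOf ρ d = F ∧ faceOf ρ d.symm = F'

lemma stepNC_symm : Symmetric (StepNC ρ C) := by
  rintro F F' ⟨h1, h2, d, hd1, hd2⟩
  exact ⟨h2, h1, d.symm, hd2, by rwa [SimpleGraph.Dart.symm_symm]⟩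

/-- the class of a face -/
def Cls (F₀ : Set (D n)) : Set (Set (D n)) :=
  {F | Relation.ReflTransGen (StepNC ρ C) F₀ F}

lemma mem_cls_self (F₀ : Set (D n)) : F₀ ∈ Cls ρ C F₀ := Relation.ReflTransGen.refl

lemma cls_ne_C {F₀ : Set (D n)} (h0 : F₀ ≠ C) {F : Set (D n)} (h : F ∈ Cls ρ C F₀) :
    F ≠ C := by
  induction h with
  | refl => exact h0
  | tail _ hstep _ => exact hstep.2.1

lemma cls_closed {F₀ : Set (D n)} (h0 : F₀ ≠ C) {d : D n}
    (h : faceOf ρ d ∈ Cls ρ C F₀) (hne : faceOf ρ d.symm ≠ C) :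
    faceOf ρ d.symm ∈ Cls ρ C F₀ :=
  Relation.ReflTransGen.tail h ⟨cls_ne_C ρ C h0 h, hne, d, rfl, rfl⟩

lemma cls_trans {F₀ F₁ F : Set (D n)} (h1 : F ∈ Cls ρ C F₀) (h2 : F ∈ Cls ρ C F₁) :
    F₁ ∈ Cls ρ C F₀ :=
  h1.trans ((@Relation.ReflTransGen.stdSymm _ (StepNC ρ C) ⟨fun a b h => stepNC_symm ρ C h⟩).symm _ _ h2)

lemma rtg_reachable (hs : DualSimple ρ) {F₀ F₁ : Set (D n)}
    (h : Relation.ReflTransGen (StepNC ρ C) F₀ F₁) :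
    ∀ (m0 : F₀ ∈ faces ρ) (h0 : F₀ ≠ C) (m1 : F₁ ∈ faces ρ) (h1 : F₁ ≠ C),
      ((dualGraph ρ).induce {F : faces ρ | (F : Set (D n)) ≠ C}).Reachable
        ⟨⟨F₀, m0⟩, h0⟩ ⟨⟨F₁, m1⟩, h1⟩ := by
  induction h with
  | refl => intro m0 h0 m1 h1; exact SimpleGraph.Reachable.refl _
  | tail hr hstep ih =>
    intro m0 h0 m1 h1
    obtain ⟨hbne, hcne, d, hd1, hd2⟩ := hstep
    have mm : _ ∈ faces ρ := ⟨d, hd1⟩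
    refine (ih m0 h0 mm hbne).trans (SimpleGraph.Adj.reachable ?_)
    show ((dualGraph ρ).comap _).Adj _ _
    rw [SimpleGraph.comap_adj]
    refine ⟨?_, d, hd1, hd2⟩
    intro hFF
    have : faceOf ρ d = faceOf ρ d.symm := by
      rw [hd1, hd2]
      exact congrArg Subtype.val hFF
    exact hs.1 d this

/-! ### purity and selection of a good class -/

/-- a vertex all of whose corners are faces of `A` (or `C` itself) -/
def Pure (A : Set (Set (D n))) (v : Fin n) : Prop :=
  ∀ d : D n, d.fst = v → faceOf ρ d ∈ A ∨ faceOf ρ d = C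

/-- build a dart of the complete graph from two distinct vertices -/
def mkDart (v w : Fin n) (h : v ≠ w) : D n := ⟨(v, w), by simpa using h⟩

@[simp] lemma mkDart_fst {v w : Fin n} (h : v ≠ w) : (mkDart v w h).fst = v := rfl
@[simp] lemma mkDart_snd {v w : Fin n} (h : v ≠ w) : (mkDart v w h).snd = w := rfl

lemma not_two_pure (hρ : IsRotationSystem ⊤ ρ) (hs : DualSimple ρ) (hn : 9 ≤ n)
    {A₀ A₁ : Set (Set (D n))}
    (hdisj : ∀ F, F ∈ A₀ → F ∈ A₁ → False)
    {v₀ v₁ : Fin n} (hp0 : Pure ρ C A₀ v₀) (hp1 : Pure ρ C A₁ v₁) : False := by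
  have hcard : 1 < Fintype.card (Fin n) := by simpa using (by omega : 1 < n)
  by_cases hv : v₀ = v₁
  · subst hv
    obtain ⟨u, hu⟩ := Fintype.exists_ne_of_one_lt_card hcard v₀
    have hadj : v₀ ≠ u := fun h => hu h.symm
    set d := mkDart v₀ u hadj with hd
    have hfst : d.fst = v₀ := rfl
    have hC1 : faceOf ρ d = C := by
      rcases hp0 d hfst with h | h
      · rcases hp1 d hfst with h' | h'
        · exact absurd h' (fun h'' => hdisj _ h h'')
        · exact h'
      · exact h
    have hfst2 : (ρ d).fst = v₀ := (hρ.fst_fixed d).trans hfst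
    have hC2 : faceOf ρ (ρ d) = C := by
      rcases hp0 (ρ d) hfst2 with h | h
      · rcases hp1 (ρ d) hfst2 with h' | h'
        · exact absurd h' (fun h'' => hdisj _ h h'')
        · exact h'
      · exact h
    rw [faceOf_rho] at hC2
    exact not_both_in_C hs hC1 hC2
  · set d := mkDart v₀ v₁ hv with hd
    have hfst : d.fst = v₀ := rfl
    have hsnd : d.snd = v₁ := rfl
    have hC1 : faceOf ρ d = C := by
      rcases hp0 d hfst with h | h
      · have hmem : faceOf ρ (facePerm ρ d) = faceOf ρ d := faceOf_facePerm d
        rcases hp1 (facePerm ρ d) ((fst_facePerm hρ d).trans hsnd) with h' | h'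
        · rw [hmem] at h'; exact absurd h' (fun h'' => hdisj _ h h'')
        · rw [hmem] at h'; exact h'
      · exact h
    have hC2 : faceOf ρ d.symm = C := by
      have hfsts : d.symm.fst = v₁ := hsnd
      rcases hp1 d.symm hfsts with h | h
      · have hmem : faceOf ρ (facePerm ρ d.symm) = faceOf ρ d.symm := faceOf_facePerm d.symm
        have hfstp : (facePerm ρ d.symm).fst = v₀ := by
          rw [fst_facePerm hρ d.symm]; exact hfst
        rcases hp0 (facePerm ρ d.symm) hfstp with h' | h'
        · rw [hmem] at h'; exact absurd h (fun h'' => hdisj _ h' h'')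
        · rw [hmem] at h'; exact h'
      · exact h
    exact not_both_in_C hs hC1 hC2

/-- From a cutface we can select a class `A` of non-C faces that is closed under
edge-sharing (avoiding C) and such that no vertex is `A`-pure. -/
lemma exists_good_class (hρ : IsRotationSystem ⊤ ρ) (hs : DualSimple ρ) (hn : 9 ≤ n)
    (hC : IsCutface ρ C) :
    ∃ A : Set (Set (D n)),
      (∃ d : D n, faceOf ρ d ∈ A) ∧
      C ∉ A ∧
      (∀ d : D n, faceOf ρ d ∈ A → faceOf ρ d.symm ≠ C → faceOf ρ d.symm ∈ A) ∧
      (∀ v : Fin n, ∃ d : D n, d.fst = v ∧ faceOf ρ d ∉ A ∧ faceOf ρ d ≠ C) := by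
  classical
  -- the induced graph is nonempty
  have h01 : (⟨0, by omega⟩ : Fin n) ≠ ⟨1, by omega⟩ := by
    intro h
    exact absurd (congrArg Fin.val h) (by simp)
  set d₀ : D n := mkDart _ _ h01 with hd₀
  have hne : Nonempty ({F : faces ρ | (F : Set (D n)) ≠ C}) := by
    by_cases h : faceOf ρ d₀ = C
    · refine ⟨⟨⟨faceOf ρ d₀.symm, ⟨d₀.symm, rfl⟩⟩, ?_⟩⟩
      intro hcc
      exact hs.1 d₀ (by rw [h, ← hcc])
    · exact ⟨⟨⟨faceOf ρ d₀, ⟨d₀, rfl⟩⟩, h⟩⟩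
  have hnp : ¬ ((dualGraph ρ).induce {F : faces ρ | (F : Set (D n)) ≠ C}).Preconnected := by
    intro hp
    exact hC.2 ((SimpleGraph.connected_iff _).2 ⟨hp, hne⟩)
  rw [SimpleGraph.Preconnected] at hnp
  push_neg at hnp
  obtain ⟨x, y, hxy⟩ := hnp
  obtain ⟨⟨F₀, m₀⟩, h₀⟩ := x
  obtain ⟨⟨F₁, m₁⟩, h₁⟩ := y
  simp only [Set.mem_setOf_eq] at h₀ h₁
  -- F₁ is not in the class of F₀
  have hF10 : F₁ ∉ Cls ρ C F₀ := by
    intro hmem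
    exact hxy (rtg_reachable ρ C hs hmem m₀ h₀ m₁ h₁)
  have hdisj : ∀ F, F ∈ Cls ρ C F₀ → F ∈ Cls ρ C F₁ → False := by
    intro F hF0 hF1
    exact hF10 (cls_trans ρ C hF0 hF1)
  obtain ⟨e₀, he₀⟩ := m₀
  obtain ⟨e₁, he₁⟩ := m₁
  by_cases hpure : ∃ v, Pure ρ C (Cls ρ C F₀) v
  · -- use the class of F₁
    refine ⟨Cls ρ C F₁, ⟨e₁, ?_⟩, ?_, ?_, ?_⟩
    · rw [he₁]; exact mem_cls_self ρ C F₁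
    · intro hmem
      exact (cls_ne_C ρ C h₁ hmem) rfl
    · intro d hd hne'
      exact cls_closed ρ C h₁ hd hne'
    · intro v
      by_contra hcon
      push_neg at hcon
      obtain ⟨v₀, hv₀⟩ := hpure
      refine not_two_pure ρ C hρ hs hn (fun F a b => hdisj F b a) (v₀ := v) (v₁ := v₀) ?_ hv₀
      intro d hd
      by_cases hh : faceOf ρ d ∈ Cls ρ C F₁
      · exact Or.inl hh
      · exact Or.inr (hcon d hd hh)
  · -- use the class of F₀
    refine ⟨Cls ρ C F₀, ⟨e₀, ?_⟩, ?_, ?_, ?_⟩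
    · rw [he₀]; exact mem_cls_self ρ C F₀
    · intro hmem
      exact (cls_ne_C ρ C h₀ hmem) rfl
    · intro d hd hne'
      exact cls_closed ρ C h₀ hd hne'
    · intro v
      by_contra hcon
      push_neg at hcon
      apply hpure
      refine ⟨v, ?_⟩
      intro d hd
      by_cases hh : faceOf ρ d ∈ Cls ρ C F₀
      · exact Or.inl hh
      · exact Or.inr (hcon d hd hh)

/-! ### generic helpers -/

lemma sum_eq_one_of_sum_eq_card {ι : Type*} (s : Finset ι) (f : ι → ℕ)
    (h1 : ∀ i ∈ s, 1 ≤ f i) (h : ∑ i ∈ s, f i = s.card) : ∀ i ∈ s, f i = 1 := by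
  by_contra hcon
  push_neg at hcon
  obtain ⟨i₀, hi₀, hne⟩ := hcon
  have h2 : 1 < f i₀ := lt_of_le_of_ne (h1 i₀ hi₀) (Ne.symm hne)
  have : ∑ i ∈ s, (1 : ℕ) < ∑ i ∈ s, f i :=
    Finset.sum_lt_sum (fun i hi => h1 i hi) ⟨i₀, hi₀, h2⟩
  rw [Finset.sum_const, smul_eq_mul, mul_one, h] at this
  exact lt_irrefl _ this

lemma even_card_of_involution {X : Type*} [DecidableEq X] :
    ∀ (m : ℕ) (s : Finset X) (f : X → X), s.card = m →
      (∀ x ∈ s, f x ∈ s) → (∀ x ∈ s, f (f x) = x) → (∀ x ∈ s, f x ≠ x) →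
      Even m := by
  intro m
  induction m using Nat.strong_induction_on with
  | _ m ih =>
    intro s f hcard hmem hinv hne
    rcases s.eq_empty_or_nonempty with h | ⟨x, hx⟩
    · subst h; simp only [Finset.card_empty] at hcard; exact hcard ▸ Even.zero
    · have hfx : f x ∈ s := hmem x hx
      have hxfx : f x ≠ x := hne x hx
      set t := s \ {x, f x} with ht
      have hsub : {x, f x} ⊆ s := by
        intro y hy
        rcases Finset.mem_insert.1 hy with h | h
        · subst h; exact hx
        · rw [Finset.mem_singleton.1 h]; exact hfx
      have hpair : ({x, f x} : Finset X).card = 2 := by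
        rw [Finset.card_insert_of_notMem (by simpa using (Ne.symm hxfx)), Finset.card_singleton]
      have htcard : t.card = m - 2 := by
        rw [ht, Finset.card_sdiff_of_subset hsub, hpair, hcard]
      have hm2 : 2 ≤ m := by
        have := Finset.card_le_card hsub
        rw [hpair, hcard] at this
        exact this
      have hmemt : ∀ y ∈ t, y ∈ s ∧ y ≠ x ∧ y ≠ f x := by
        intro y hy
        rw [ht, Finset.mem_sdiff] at hy
        refine ⟨hy.1, ?_, ?_⟩
        · intro h; exact hy.2 (by simp [h])
        · intro h; exact hy.2 (by simp [h])
      have heven : Even (m - 2) := by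
        refine ih (m - 2) (by omega) t f htcard ?_ ?_ ?_
        · intro y hy
          obtain ⟨hys, hyx, hyfx⟩ := hmemt y hy
          rw [ht, Finset.mem_sdiff]
          refine ⟨hmem y hys, ?_⟩
          intro hmem2
          rcases Finset.mem_insert.1 hmem2 with h | h
          · -- f y = x, so y = f x
            apply hyfx
            rw [← hinv y hys, h]
          · rw [Finset.mem_singleton] at h
            apply hyx
            have := congrArg f h
            rw [hinv y hys, hinv x hx] at this
            exact this
        · intro y hy; exact hinv y (hmemt y hy).1
        · intro y hy; exact hne y (hmemt y hy).1
      obtain ⟨k, hk⟩ := heven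
      exact ⟨k + 1, by omega⟩

lemma card_filter_fst_mem (S : Finset (D n)) (W : Finset (Fin n)) :
    (S.filter (fun d => d.fst ∈ W)).card = ∑ v ∈ W, (S.filter (fun d => d.fst = v)).card := by
  rw [Finset.card_eq_sum_card_fiberwise (f := fun d : D n => d.fst) (s := S.filter (fun d => d.fst ∈ W))
    (t := W) (fun d hd => (Finset.mem_filter.1 hd).2)]
  apply Finset.sum_congr rfl
  intro v hv
  congr 1
  ext d
  simp only [Finset.mem_filter]
  constructor
  · rintro ⟨⟨h1, _⟩, h3⟩; exact ⟨h1, h3⟩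
  · rintro ⟨h1, h2⟩; exact ⟨⟨h1, h2 ▸ hv⟩, h2⟩

lemma card_filter_symm_pred (P : D n → Prop) :
    (Finset.univ.filter (fun d : D n => P d.symm)).card = (Finset.univ.filter P).card := by
  apply Finset.card_nbij (i := SimpleGraph.Dart.symm)
  · intro d hd
    simp only [Finset.mem_coe, Finset.mem_filter, Finset.mem_univ, true_and] at hd ⊢
    exact hd
  · intro d₁ h₁ d₂ h₂ h
    have := congrArg SimpleGraph.Dart.symm h
    rwa [SimpleGraph.Dart.symm_symm, SimpleGraph.Dart.symm_symm] at this
  · intro d hd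
    simp only [Finset.coe_filter, Finset.mem_univ, true_and, Set.mem_setOf_eq,
      Set.mem_image] at hd ⊢
    exact ⟨d.symm, by rwa [SimpleGraph.Dart.symm_symm], SimpleGraph.Dart.symm_symm d⟩

/-! ### the counted sets -/

variable (A : Set (Set (D n)))

noncomputable def ASet : Finset (D n) := Finset.univ.filter (fun d => faceOf ρ d ∈ A)

noncomputable def aS : Finset (D n) :=
  Finset.univ.filter (fun d => faceOf ρ d ∈ A ∧ faceOf ρ d.symm = C)

noncomputable def bS : Finset (D n) :=
  Finset.univ.filter (fun d => faceOf ρ d ∉ A ∧ faceOf ρ d ≠ C ∧ faceOf ρ d.symm = C)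

noncomputable def CSet : Finset (D n) := Finset.univ.filter (fun d => faceOf ρ d = C)

noncomputable def TSet : Finset (D n) := Finset.univ.filter (fun d => faceOf ρ d.symm = C)

noncomputable def SAset : Finset (Fin n) :=
  Finset.univ.filter (fun v => ∃ d : D n, d.fst = v ∧ faceOf ρ d ∈ A)

noncomputable def DintS : Finset (D n) :=
  Finset.univ.filter (fun d => faceOf ρ d ∈ A ∧ faceOf ρ d.symm ∈ A)

noncomputable def SymCS : Finset (D n) :=
  Finset.univ.filter (fun d => faceOf ρ d = C ∨ faceOf ρ d.symm = C)

noncomputable def CWS : Finset (D n) :=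
  (SymCS ρ C).filter (fun d => d.fst ∈ SAset ρ A ∧ d.snd ∈ SAset ρ A)

noncomputable def SSdarts : Finset (D n) :=
  Finset.univ.filter (fun d => d.fst ∈ SAset ρ A ∧ d.snd ∈ SAset ρ A)

/-! ### basic counting -/

lemma TSet_card : (TSet ρ C).card = (CSet ρ C).card :=
  card_filter_symm_pred (fun d => faceOf ρ d = C)

lemma aS_eq_TSet_filter : aS ρ C A = (TSet ρ C).filter (fun d => faceOf ρ d ∈ A) := by
  ext d
  simp only [aS, TSet, Finset.mem_filter, Finset.mem_univ, true_and]
  tauto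

lemma bS_eq_TSet_filter (hs : DualSimple ρ) :
    bS ρ C A = (TSet ρ C).filter (fun d => faceOf ρ d ∉ A) := by
  ext d
  simp only [bS, TSet, Finset.mem_filter, Finset.mem_univ, true_and]
  constructor
  · rintro ⟨h1, h2, h3⟩; exact ⟨h3, h1⟩
  · rintro ⟨h1, h2⟩
    refine ⟨h2, ?_, h1⟩
    intro hC
    exact not_both_in_C hs hC h1

lemma TSet_filter_card_split (hs : DualSimple ρ) (P : D n → Prop) [DecidablePred P] :
    ((TSet ρ C).filter P).card
      = ((aS ρ C A).filter P).card + ((bS ρ C A).filter P).card := by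
  rw [aS_eq_TSet_filter, bS_eq_TSet_filter ρ C A hs, Finset.filter_comm, Finset.filter_comm
    (fun d => faceOf ρ d ∉ A)]
  exact (Finset.card_filter_add_card_filter_not (s := (TSet ρ C).filter P)
    (fun d => faceOf ρ d ∈ A)).symm

lemma ell_split (hs : DualSimple ρ) :
    (CSet ρ C).card = (aS ρ C A).card + (bS ρ C A).card := by
  rw [← TSet_card, aS_eq_TSet_filter, bS_eq_TSet_filter ρ C A hs]
  exact (Finset.card_filter_add_card_filter_not (fun d => faceOf ρ d ∈ A)).symm

/-! ### membership of endpoints of A-darts in SA -/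

lemma fst_mem_SA {d : D n} (h : faceOf ρ d ∈ A) : d.fst ∈ SAset ρ A := by
  simp only [SAset, Finset.mem_filter, Finset.mem_univ, true_and]
  exact ⟨d, rfl, h⟩

lemma snd_mem_SA (hρ : IsRotationSystem ⊤ ρ) {d : D n} (h : faceOf ρ d ∈ A) :
    d.snd ∈ SAset ρ A := by
  simp only [SAset, Finset.mem_filter, Finset.mem_univ, true_and]
  exact ⟨facePerm ρ d, fst_facePerm hρ d, by rwa [faceOf_facePerm]⟩

/-! ### per-vertex counts -/

lemma cv_eq_tv (hρ : IsRotationSystem ⊤ ρ) (v : Fin n) :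
    ((CSet ρ C).filter (fun d => d.fst = v)).card
      = ((TSet ρ C).filter (fun d => d.fst = v)).card := by
  symm
  apply Finset.card_nbij (i := fun d => ρ d)
  · intro d hd
    simp only [Finset.mem_coe, TSet, CSet, Finset.mem_filter, Finset.mem_univ, true_and] at hd ⊢
    refine ⟨?_, (hρ.fst_fixed d).trans hd.2⟩
    rw [faceOf_rho]; exact hd.1
  · intro d₁ h₁ d₂ h₂ h
    exact ρ.injective h
  · intro c hc
    simp only [CSet, Finset.coe_filter, Set.mem_setOf_eq, Finset.mem_filter,
      Finset.mem_univ, true_and] at hc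
    obtain ⟨hcC, hcv⟩ := hc
    refine ⟨ρ.symm c, ?_, Equiv.apply_symm_apply ρ c⟩
    simp only [TSet, Finset.coe_filter, Set.mem_setOf_eq, Finset.mem_filter,
      Finset.mem_univ, true_and]
    constructor
    · have h2 := faceOf_rho (ρ := ρ) (ρ.symm c)
      rw [Equiv.apply_symm_apply] at h2
      rw [← h2]; exact hcC
    · have h3 := hρ.fst_fixed (ρ.symm c)
      rw [Equiv.apply_symm_apply] at h3
      rw [← h3]; exact hcv

lemma cv_split (hρ : IsRotationSystem ⊤ ρ) (hs : DualSimple ρ) (v : Fin n) :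
    ((CSet ρ C).filter (fun d => d.fst = v)).card
      = ((aS ρ C A).filter (fun d => d.fst = v)).card
        + ((bS ρ C A).filter (fun d => d.fst = v)).card := by
  rw [cv_eq_tv ρ C hρ v]
  exact TSet_filter_card_split ρ C A hs (fun d => d.fst = v)

/-! ### sums over vertices -/

lemma aS_card_sum :
    (aS ρ C A).card = ∑ v ∈ SAset ρ A, ((aS ρ C A).filter (fun d => d.fst = v)).card := by
  have e : (aS ρ C A).filter (fun d => d.fst ∈ SAset ρ A) = aS ρ C A := by
    apply Finset.filter_true_of_mem
    intro d hd
    simp only [aS, Finset.mem_filter, Finset.mem_univ, true_and] at hd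
    exact fst_mem_SA ρ A hd.1
  rw [← e, card_filter_fst_mem]
  refine Finset.sum_congr rfl fun v hv => ?_
  congr 1
  ext d
  simp only [Finset.mem_filter]
  constructor
  · rintro ⟨h1, h2⟩; exact ⟨⟨h1, h2 ▸ hv⟩, h2⟩
  · rintro ⟨⟨h1, _⟩, h3⟩; exact ⟨h1, h3⟩

lemma bS_card_sum :
    (bS ρ C A).card = (∑ v ∈ SAset ρ A, ((bS ρ C A).filter (fun d => d.fst = v)).card)
      + ((bS ρ C A).filter (fun d => d.fst ∉ SAset ρ A)).card := by
  have h1 := Finset.card_filter_add_card_filter_not (s := bS ρ C A)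
    (fun d => d.fst ∈ SAset ρ A)
  rw [card_filter_fst_mem] at h1
  omega

/-! ### positivity of the per-vertex counts -/

lemma alpha_pos (hρ : IsRotationSystem ⊤ ρ)
    (hclosed : ∀ d : D n, faceOf ρ d ∈ A → faceOf ρ d.symm ≠ C → faceOf ρ d.symm ∈ A)
    {v : Fin n} (hv : v ∈ SAset ρ A)
    (hnp : ∃ d : D n, d.fst = v ∧ faceOf ρ d ∉ A ∧ faceOf ρ d ≠ C) :
    1 ≤ ((aS ρ C A).filter (fun d => d.fst = v)).card := by
  by_contra hcon
  push_neg at hcon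
  have hemp : ∀ d : D n, d.fst = v → ¬(faceOf ρ d ∈ A ∧ faceOf ρ d.symm = C) := by
    intro d hd hmem
    have hm : d ∈ (aS ρ C A).filter (fun d => d.fst = v) := by
      simp only [aS, Finset.mem_filter, Finset.mem_univ, true_and]
      exact ⟨hmem, hd⟩
    have := Finset.card_pos.2 ⟨d, hm⟩
    omega
  simp only [SAset, Finset.mem_filter, Finset.mem_univ, true_and] at hv
  obtain ⟨dA, hdA, hA⟩ := hv
  obtain ⟨dB, hdB, hBA, hBC⟩ := hnp
  apply hBA
  refine orbit_closed hρ (P := fun d => faceOf ρ d ∈ A) ?_ hdA hdB hA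
  intro d hd hP
  rw [faceOf_rho]
  refine hclosed d hP ?_
  intro hCC
  exact hemp d hd ⟨hP, hCC⟩

lemma beta_pos (hρ : IsRotationSystem ⊤ ρ)
    (hclosed : ∀ d : D n, faceOf ρ d ∈ A → faceOf ρ d.symm ≠ C → faceOf ρ d.symm ∈ A)
    {v : Fin n} (hv : v ∈ SAset ρ A)
    (hnp : ∃ d : D n, d.fst = v ∧ faceOf ρ d ∉ A ∧ faceOf ρ d ≠ C) :
    1 ≤ ((bS ρ C A).filter (fun d => d.fst = v)).card := by
  by_contra hcon
  push_neg at hcon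
  have hemp : ∀ d : D n, d.fst = v →
      ¬(faceOf ρ d ∉ A ∧ faceOf ρ d ≠ C ∧ faceOf ρ d.symm = C) := by
    intro d hd hmem
    have hm : d ∈ (bS ρ C A).filter (fun d => d.fst = v) := by
      simp only [bS, Finset.mem_filter, Finset.mem_univ, true_and]
      exact ⟨hmem, hd⟩
    have := Finset.card_pos.2 ⟨d, hm⟩
    omega
  simp only [SAset, Finset.mem_filter, Finset.mem_univ, true_and] at hv
  obtain ⟨dA, hdA, hA⟩ := hv
  obtain ⟨dB, hdB, hBA, hBC⟩ := hnp
  have hend : faceOf ρ dA ∉ A ∧ faceOf ρ dA ≠ C := by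
    refine orbit_closed hρ (P := fun d => faceOf ρ d ∉ A ∧ faceOf ρ d ≠ C) ?_ hdB hdA ⟨hBA, hBC⟩
    intro d hd hP
    have hsymC : faceOf ρ d.symm ≠ C := by
      intro hCC
      exact hemp d hd ⟨hP.1, hP.2, hCC⟩
    have hsymA : faceOf ρ d.symm ∉ A := by
      intro hA'
      apply hP.1
      have h2 := hclosed d.symm hA' (by rw [SimpleGraph.Dart.symm_symm]; exact hP.2)
      rwa [SimpleGraph.Dart.symm_symm] at h2
    rw [faceOf_rho]
    exact ⟨hsymA, hsymC⟩
  exact hend.1 hA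

/-! ### the complete-graph budget -/

lemma SS_card :
    (SSdarts ρ A).card = (SAset ρ A).card * (SAset ρ A).card - (SAset ρ A).card := by
  rw [← Finset.offDiag_card]
  apply Finset.card_nbij (i := fun d => (d.fst, d.snd))
  · intro d hd
    simp only [Finset.mem_coe, SSdarts, Finset.mem_filter, Finset.mem_univ, true_and] at hd
    rw [Finset.mem_coe, Finset.mem_offDiag]
    exact ⟨hd.1, hd.2, dart_fst_ne_snd d⟩
  · intro d1 h1 d2 h2 h
    exact dart_ext (congrArg Prod.fst h) (congrArg Prod.snd h)
  · intro p hp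
    rw [Finset.mem_coe, Finset.mem_offDiag] at hp
    refine ⟨mkDart p.1 p.2 hp.2.2, ?_, ?_⟩
    · simp only [Finset.mem_coe, SSdarts, Finset.mem_filter, Finset.mem_univ, true_and]
      exact ⟨hp.1, hp.2.1⟩
    · rfl

lemma Dint_subset_SS (hρ : IsRotationSystem ⊤ ρ) : DintS ρ A ⊆ SSdarts ρ A := by
  intro d hd
  simp only [DintS, SSdarts, Finset.mem_filter, Finset.mem_univ, true_and] at hd ⊢
  exact ⟨fst_mem_SA ρ A hd.1, snd_mem_SA ρ A hρ hd.1⟩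

lemma CW_subset_SS : CWS ρ C A ⊆ SSdarts ρ A := by
  intro d hd
  simp only [CWS, SSdarts, Finset.mem_filter, Finset.mem_univ, true_and] at hd ⊢
  exact hd.2

lemma Dint_CW_bound (hρ : IsRotationSystem ⊤ ρ) (hCA : C ∉ A) :
    (DintS ρ A).card + (CWS ρ C A).card ≤ (SSdarts ρ A).card := by
  have hdisj : Disjoint (DintS ρ A) (CWS ρ C A) := by
    rw [Finset.disjoint_left]
    intro d hd hd'
    simp only [DintS, Finset.mem_filter, Finset.mem_univ, true_and] at hd
    simp only [CWS, SymCS, Finset.mem_filter, Finset.mem_univ, true_and] at hd'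
    rcases hd'.1 with h | h
    · exact hCA (h ▸ hd.1)
    · exact hCA (h ▸ hd.2)
  rw [← Finset.card_union_of_disjoint hdisj]
  exact Finset.card_le_card (Finset.union_subset (Dint_subset_SS ρ A hρ) (CW_subset_SS ρ C A))

/-! ### splitting the A-darts -/

lemma AS_split (hCA : C ∉ A)
    (hclosed : ∀ d : D n, faceOf ρ d ∈ A → faceOf ρ d.symm ≠ C → faceOf ρ d.symm ∈ A) :
    (ASet ρ A).card = (DintS ρ A).card + (aS ρ C A).card := by
  have h := Finset.card_filter_add_card_filter_not (s := ASet ρ A)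
    (fun d => faceOf ρ d.symm = C)
  have e1 : (ASet ρ A).filter (fun d => faceOf ρ d.symm = C) = aS ρ C A := by
    ext d
    simp only [ASet, aS, Finset.mem_filter, Finset.mem_univ, true_and]
  have e2 : (ASet ρ A).filter (fun d => ¬faceOf ρ d.symm = C) = DintS ρ A := by
    ext d
    simp only [ASet, DintS, Finset.mem_filter, Finset.mem_univ, true_and]
    constructor
    · rintro ⟨h1, h2⟩; exact ⟨h1, hclosed d h1 h2⟩
    · rintro ⟨h1, h2⟩; exact ⟨h1, fun hcc => hCA (hcc ▸ h2)⟩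
  rw [e1, e2] at h
  omega

/-! ### each face has at least three darts per C-shared dart -/

lemma aS_face_inj (hs : DualSimple ρ) {d d' : D n}
    (hd : d ∈ aS ρ C A) (hd' : d' ∈ aS ρ C A)
    (h : faceOf ρ d = faceOf ρ d') : d = d' := by
  simp only [aS, Finset.mem_filter, Finset.mem_univ, true_and] at hd hd'
  exact eq_of_shared hs h (hd.2.trans hd'.2.symm)

lemma pow_fix_lt3 (hρ : IsRotationSystem ⊤ ρ) (hs : DualSimple ρ) (x : D n) {j : ℕ}
    (hj : j < 3) (h : (facePerm ρ ^ j) x = x) : j = 0 := by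
  interval_cases j
  · rfl
  · rw [pow_one] at h; exact absurd h (facePerm_ne hρ x)
  · rw [pow_succ, pow_one, Equiv.Perm.mul_apply] at h
    exact absurd h (facePerm_sq_ne hρ hs x)

lemma pow_lt3_inj (hρ : IsRotationSystem ⊤ ρ) (hs : DualSimple ρ) (x : D n) {k k' : ℕ}
    (hk : k < 3) (hk' : k' < 3)
    (h : (facePerm ρ ^ k) x = (facePerm ρ ^ k') x) : k = k' := by
  rcases le_total k k' with hle | hle
  · have h2 : (facePerm ρ ^ (k' - k)) ((facePerm ρ ^ k) x) = (facePerm ρ ^ k) x := by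
      rw [← Equiv.Perm.mul_apply, ← pow_add, Nat.sub_add_cancel hle]
      exact h.symm
    have h3 := pow_fix_lt3 ρ hρ hs _ (j := k' - k) (by omega) h2
    omega
  · have h2 : (facePerm ρ ^ (k - k')) ((facePerm ρ ^ k') x) = (facePerm ρ ^ k') x := by
      rw [← Equiv.Perm.mul_apply, ← pow_add, Nat.sub_add_cancel hle]
      exact h
    have h3 := pow_fix_lt3 ρ hρ hs _ (j := k - k') (by omega) h2
    omega

lemma three_a_le_AS (hρ : IsRotationSystem ⊤ ρ) (hs : DualSimple ρ) :
    3 * (aS ρ C A).card ≤ (ASet ρ A).card := by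
  have hcard : ((aS ρ C A) ×ˢ (Finset.range 3)).card = 3 * (aS ρ C A).card := by
    rw [Finset.card_product, Finset.card_range]; ring
  rw [← hcard]
  apply Finset.card_le_card_of_injOn (fun p => (facePerm ρ ^ p.2) p.1)
  · intro p hp
    rw [Finset.mem_coe, Finset.mem_product] at hp
    simp only [Finset.mem_coe, ASet, Finset.mem_filter, Finset.mem_univ, true_and]
    rw [faceOf_facePerm_pow]
    simp only [aS, Finset.mem_filter, Finset.mem_univ, true_and] at hp
    exact hp.1.1
  · intro p hp q hq h
    rw [Finset.mem_coe, Finset.mem_product] at hp hq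
    dsimp only at h
    have hface : faceOf ρ p.1 = faceOf ρ q.1 := by
      have h2 := congrArg (faceOf ρ) h
      rwa [faceOf_facePerm_pow, faceOf_facePerm_pow] at h2
    have h1 : p.1 = q.1 := aS_face_inj ρ C A hs hp.1 hq.1 hface
    have h2 : p.2 = q.2 := by
      rw [h1] at h
      exact pow_lt3_inj ρ hρ hs q.1 (Finset.mem_range.1 hp.2) (Finset.mem_range.1 hq.2) h
    exact Prod.ext h1 h2

/-! ### the X/Z decomposition -/

lemma SymCS_split_filter (hs : DualSimple ρ) (Q : D n → Prop) [DecidablePred Q] :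
    ((SymCS ρ C).filter Q).card
      = ((CSet ρ C).filter Q).card + ((TSet ρ C).filter Q).card := by
  have hU : SymCS ρ C = CSet ρ C ∪ TSet ρ C := by
    ext d
    simp only [SymCS, CSet, TSet, Finset.mem_union, Finset.mem_filter, Finset.mem_univ, true_and]
  have hdisj : Disjoint ((CSet ρ C).filter Q) ((TSet ρ C).filter Q) := by
    rw [Finset.disjoint_left]
    intro d hd hd'
    simp only [CSet, TSet, Finset.mem_filter, Finset.mem_univ, true_and] at hd hd'
    exact not_both_in_C hs hd.1 hd'.1
  rw [hU, Finset.filter_union, Finset.card_union_of_disjoint hdisj]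

lemma cset_tset_card (hρ : IsRotationSystem ⊤ ρ) (q : Fin n → Prop) [DecidablePred q] :
    ((CSet ρ C).filter (fun d => q d.fst)).card
      = ((TSet ρ C).filter (fun d => q d.fst)).card := by
  symm
  apply Finset.card_nbij (i := fun d => ρ d)
  · intro d hd
    simp only [Finset.mem_coe, TSet, CSet, Finset.mem_filter, Finset.mem_univ, true_and] at hd ⊢
    refine ⟨?_, by rw [hρ.fst_fixed d]; exact hd.2⟩
    rw [faceOf_rho]; exact hd.1
  · intro d₁ h₁ d₂ h₂ h
    exact ρ.injective h
  · intro c hc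
    simp only [CSet, Finset.coe_filter, Set.mem_setOf_eq, Finset.mem_filter,
      Finset.mem_univ, true_and] at hc
    obtain ⟨hcC, hcv⟩ := hc
    refine ⟨ρ.symm c, ?_, Equiv.apply_symm_apply ρ c⟩
    simp only [TSet, Finset.coe_filter, Set.mem_setOf_eq, Finset.mem_filter,
      Finset.mem_univ, true_and]
    constructor
    · have h2 := faceOf_rho (ρ := ρ) (ρ.symm c)
      rw [Equiv.apply_symm_apply] at h2
      rw [← h2]; exact hcC
    · have h3 := hρ.fst_fixed (ρ.symm c)
      rw [Equiv.apply_symm_apply] at h3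
      rw [← h3]; exact hcv

lemma X_eq (hρ : IsRotationSystem ⊤ ρ) (hs : DualSimple ρ) :
    ((SymCS ρ C).filter (fun d => d.fst ∈ SAset ρ A)).card
      = 2 * ((aS ρ C A).card
          + ∑ v ∈ SAset ρ A, ((bS ρ C A).filter (fun d => d.fst = v)).card) := by
  rw [SymCS_split_filter ρ C hs, cset_tset_card ρ C hρ (fun v => v ∈ SAset ρ A),
    card_filter_fst_mem]
  have h1 : ∀ v ∈ SAset ρ A, ((TSet ρ C).filter (fun d => d.fst = v)).card
      = ((aS ρ C A).filter (fun d => d.fst = v)).card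
        + ((bS ρ C A).filter (fun d => d.fst = v)).card := by
    intro v _
    exact TSet_filter_card_split ρ C A hs (fun d => d.fst = v)
  rw [Finset.sum_congr rfl h1, Finset.sum_add_distrib, ← aS_card_sum]
  ring

lemma Z_eq (hρ : IsRotationSystem ⊤ ρ) (hs : DualSimple ρ) :
    ((SymCS ρ C).filter (fun d => d.fst ∉ SAset ρ A)).card
      = 2 * ((bS ρ C A).filter (fun d => d.fst ∉ SAset ρ A)).card := by
  rw [SymCS_split_filter ρ C hs, cset_tset_card ρ C hρ (fun v => v ∉ SAset ρ A)]
  have h1 : ((TSet ρ C).filter (fun d => d.fst ∉ SAset ρ A)).card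
      = ((aS ρ C A).filter (fun d => d.fst ∉ SAset ρ A)).card
        + ((bS ρ C A).filter (fun d => d.fst ∉ SAset ρ A)).card :=
    TSet_filter_card_split ρ C A hs _
  have h2 : ((aS ρ C A).filter (fun d => d.fst ∉ SAset ρ A)).card = 0 := by
    rw [Finset.card_eq_zero]
    apply Finset.filter_false_of_mem
    intro d hd
    simp only [aS, Finset.mem_filter, Finset.mem_univ, true_and] at hd
    exact fun hcon => hcon (fst_mem_SA ρ A hd.1)
  rw [h1, h2]
  ring

lemma X_split :
    ((SymCS ρ C).filter (fun d => d.fst ∈ SAset ρ A)).card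
      = (CWS ρ C A).card
        + ((SymCS ρ C).filter (fun d => d.fst ∈ SAset ρ A ∧ d.snd ∉ SAset ρ A)).card := by
  have h := Finset.card_filter_add_card_filter_not
    (s := (SymCS ρ C).filter (fun d => d.fst ∈ SAset ρ A)) (fun d => d.snd ∈ SAset ρ A)
  have e1 : ((SymCS ρ C).filter (fun d => d.fst ∈ SAset ρ A)).filter
      (fun d => d.snd ∈ SAset ρ A) = CWS ρ C A := by
    ext d
    simp only [CWS, Finset.mem_filter]
    tauto
  have e2 : ((SymCS ρ C).filter (fun d => d.fst ∈ SAset ρ A)).filter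
      (fun d => ¬ d.snd ∈ SAset ρ A)
      = (SymCS ρ C).filter (fun d => d.fst ∈ SAset ρ A ∧ d.snd ∉ SAset ρ A) := by
    ext d
    simp only [Finset.mem_filter]
    tauto
  rw [e1, e2] at h
  omega

lemma Y1_le_Z :
    ((SymCS ρ C).filter (fun d => d.fst ∈ SAset ρ A ∧ d.snd ∉ SAset ρ A)).card
      ≤ ((SymCS ρ C).filter (fun d => d.fst ∉ SAset ρ A)).card := by
  apply Finset.card_le_card_of_injOn SimpleGraph.Dart.symm
  · intro d hd
    simp only [Finset.mem_coe, SymCS, Finset.mem_filter, Finset.mem_univ, true_and] at hd ⊢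
    obtain ⟨hor, _, hsnd⟩ := hd
    constructor
    · rcases hor with h | h
      · exact Or.inr (by rwa [SimpleGraph.Dart.symm_symm])
      · exact Or.inl h
    · exact hsnd
  · intro d₁ h₁ d₂ h₂ h
    have := congrArg SimpleGraph.Dart.symm h
    rwa [SimpleGraph.Dart.symm_symm, SimpleGraph.Dart.symm_symm] at this

lemma two_a_le_CW (hρ : IsRotationSystem ⊤ ρ) (hCA : C ∉ A) :
    2 * (aS ρ C A).card ≤ (CWS ρ C A).card := by
  have hsub1 : aS ρ C A ⊆ CWS ρ C A := by
    intro d hd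
    simp only [aS, Finset.mem_filter, Finset.mem_univ, true_and] at hd
    simp only [CWS, SymCS, Finset.mem_filter, Finset.mem_univ, true_and]
    exact ⟨Or.inr hd.2, fst_mem_SA ρ A hd.1, snd_mem_SA ρ A hρ hd.1⟩
  have hsub2 : (aS ρ C A).image SimpleGraph.Dart.symm ⊆ CWS ρ C A := by
    intro e he
    rw [Finset.mem_image] at he
    obtain ⟨d, hd, rfl⟩ := he
    simp only [aS, Finset.mem_filter, Finset.mem_univ, true_and] at hd
    simp only [CWS, SymCS, Finset.mem_filter, Finset.mem_univ, true_and]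
    refine ⟨Or.inl hd.2, ?_, ?_⟩
    · show d.snd ∈ SAset ρ A
      exact snd_mem_SA ρ A hρ hd.1
    · show d.fst ∈ SAset ρ A
      exact fst_mem_SA ρ A hd.1
  have hdisj : Disjoint (aS ρ C A) ((aS ρ C A).image SimpleGraph.Dart.symm) := by
    rw [Finset.disjoint_left]
    intro d hd hd'
    rw [Finset.mem_image] at hd'
    obtain ⟨e, he, hde⟩ := hd'
    simp only [aS, Finset.mem_filter, Finset.mem_univ, true_and] at hd he
    apply hCA
    rw [← hde] at hd
    exact he.2 ▸ hd.1
  have himg : ((aS ρ C A).image SimpleGraph.Dart.symm).card = (aS ρ C A).card :=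
    Finset.card_image_of_injective _ (SimpleGraph.Dart.symm_involutive.injective)
  have := Finset.card_le_card (Finset.union_subset hsub1 hsub2)
  rw [Finset.card_union_of_disjoint hdisj, himg] at this
  omega

/-! ### the s = 7 endgame -/

lemma s7_contradiction (hρ : IsRotationSystem ⊤ ρ) (hs : DualSimple ρ) (hCA : C ∉ A)
    (hclosed : ∀ d : D n, faceOf ρ d ∈ A → faceOf ρ d.symm ≠ C → faceOf ρ d.symm ∈ A)
    (h_s : (SAset ρ A).card = 7)
    (h_a : (aS ρ C A).card = 7)
    (h_AS : (ASet ρ A).card = 21)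
    (halpha : ∀ v ∈ SAset ρ A, ((aS ρ C A).filter (fun d => d.fst = v)).card = 1)
    (hbeta : ∀ v ∈ SAset ρ A, ((bS ρ C A).filter (fun d => d.fst = v)).card = 1)
    (hZ0 : ((SymCS ρ C).filter (fun d => d.fst ∉ SAset ρ A)).card = 0) :
    False := by
  classical
  have haSmem : ∀ e : D n, e ∈ aS ρ C A ↔ (faceOf ρ e ∈ A ∧ faceOf ρ e.symm = C) := by
    intro e
    simp only [aS, Finset.mem_filter, Finset.mem_univ, true_and]
  -- (E1) all darts of C and their reverses have both endpoints in SA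
  have hCfst : ∀ d : D n, (faceOf ρ d = C ∨ faceOf ρ d.symm = C) → d.fst ∈ SAset ρ A := by
    intro d hd
    by_contra hcon
    have hm : d ∈ (SymCS ρ C).filter (fun d => d.fst ∉ SAset ρ A) := by
      simp only [SymCS, Finset.mem_filter, Finset.mem_univ, true_and]
      exact ⟨hd, hcon⟩
    have := Finset.card_pos.2 ⟨d, hm⟩
    omega
  have hCends : ∀ d : D n, (faceOf ρ d = C ∨ faceOf ρ d.symm = C) →
      d.fst ∈ SAset ρ A ∧ d.snd ∈ SAset ρ A := by
    intro d hd
    refine ⟨hCfst d hd, ?_⟩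
    have h2 : d.symm.fst ∈ SAset ρ A := by
      apply hCfst d.symm
      rcases hd with h | h
      · exact Or.inr (by rwa [SimpleGraph.Dart.symm_symm])
      · exact Or.inl h
    exact h2
  -- (E2) exactly two C-darts leave each vertex of SA
  have hcv : ∀ z ∈ SAset ρ A, ((CSet ρ C).filter (fun d => d.fst = z)).card = 2 := by
    intro z hz
    rw [cv_split ρ C A hρ hs z, halpha z hz, hbeta z hz]
  have htv : ∀ z ∈ SAset ρ A, ((TSet ρ C).filter (fun d => d.fst = z)).card = 2 := by
    intro z hz
    rw [← cv_eq_tv ρ C hρ z]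
    exact hcv z hz
  -- (E3) at most s - 1 = 6 darts with both ends in SA leave each vertex of SA
  have hSz : ∀ z ∈ SAset ρ A, ((SSdarts ρ A).filter (fun d => d.fst = z)).card = 6 := by
    intro z hz
    have he : ((SSdarts ρ A).filter (fun d => d.fst = z)).card = ((SAset ρ A).erase z).card := by
      apply Finset.card_nbij (i := fun d => d.snd)
      · intro d hd
        simp only [Finset.mem_coe, SSdarts, Finset.mem_filter, Finset.mem_univ, true_and] at hd
        rw [Finset.mem_coe, Finset.mem_erase]
        exact ⟨hd.2 ▸ (dart_fst_ne_snd d).symm, hd.1.2⟩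
      · intro d1 h1 d2 h2 h
        simp only [Finset.coe_filter, Set.mem_setOf_eq] at h1 h2
        exact dart_ext (h1.2.trans h2.2.symm) h
      · intro u hu
        rw [Finset.coe_erase, Set.mem_diff] at hu
        have huSA : u ∈ SAset ρ A := by simpa using hu.1
        have hzu : z ≠ u := fun h => hu.2 (by simp [h])
        refine ⟨mkDart z u hzu, ?_, rfl⟩
        simp only [Finset.coe_filter, Set.mem_setOf_eq, SSdarts, Finset.mem_filter,
          Finset.mem_univ, true_and]
        exact ⟨⟨hz, huSA⟩, rfl⟩
    rw [he, Finset.card_erase_of_mem hz, h_s]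
  -- (E4) at most two interior darts leave each vertex of SA
  have hInt2 : ∀ z ∈ SAset ρ A, ((DintS ρ A).filter (fun d => d.fst = z)).card ≤ 2 := by
    intro z hz
    have hsub : ((CSet ρ C).filter (fun d => d.fst = z) ∪ (TSet ρ C).filter (fun d => d.fst = z))
        ∪ (DintS ρ A).filter (fun d => d.fst = z) ⊆ (SSdarts ρ A).filter (fun d => d.fst = z) := by
      intro d hd
      simp only [Finset.mem_union, CSet, TSet, DintS, Finset.mem_filter, Finset.mem_univ,
        true_and] at hd
      simp only [SSdarts, Finset.mem_filter, Finset.mem_univ, true_and]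
      rcases hd with (⟨h1, h2⟩ | ⟨h1, h2⟩) | ⟨⟨h1a, h1b⟩, h2⟩
      · exact ⟨hCends d (Or.inl h1), h2⟩
      · exact ⟨hCends d (Or.inr h1), h2⟩
      · exact ⟨⟨fst_mem_SA ρ A h1a, snd_mem_SA ρ A hρ h1a⟩, h2⟩
    have hd12 : Disjoint ((CSet ρ C).filter (fun d => d.fst = z))
        ((TSet ρ C).filter (fun d => d.fst = z)) := by
      rw [Finset.disjoint_left]
      intro d h1 h2
      simp only [CSet, TSet, Finset.mem_filter, Finset.mem_univ, true_and] at h1 h2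
      exact not_both_in_C hs h1.1 h2.1
    have hd123 : Disjoint ((CSet ρ C).filter (fun d => d.fst = z)
        ∪ (TSet ρ C).filter (fun d => d.fst = z)) ((DintS ρ A).filter (fun d => d.fst = z)) := by
      rw [Finset.disjoint_left]
      intro d h1 h2
      simp only [Finset.mem_union, CSet, TSet, DintS, Finset.mem_filter, Finset.mem_univ,
        true_and] at h1 h2
      rcases h1 with ⟨h1, _⟩ | ⟨h1, _⟩
      · exact hCA (h1 ▸ h2.1.1)
      · exact hCA (h1 ▸ h2.1.2)
    have hcard := Finset.card_le_card hsub
    rw [Finset.card_union_of_disjoint hd123, Finset.card_union_of_disjoint hd12,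
      hcv z hz, htv z hz, hSz z hz] at hcard
    omega
  -- (E5) every A-dart is one of φ^k e for a C-shared dart e and k < 3
  have hsurj : ∀ d : D n, faceOf ρ d ∈ A →
      ∃ e ∈ aS ρ C A, ∃ k, k < 3 ∧ (facePerm ρ ^ k) e = d := by
    intro d hd
    have hcardle : (ASet ρ A).card ≤ ((aS ρ C A) ×ˢ Finset.range 3).card := by
      rw [Finset.card_product, Finset.card_range, h_AS, h_a]
    have hmem : ∀ (p : D n × ℕ) (_ : p ∈ (aS ρ C A) ×ˢ Finset.range 3),
        (facePerm ρ ^ p.2) p.1 ∈ ASet ρ A := by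
      intro p hp
      rw [Finset.mem_product] at hp
      simp only [ASet, Finset.mem_filter, Finset.mem_univ, true_and]
      rw [faceOf_facePerm_pow]
      exact ((haSmem p.1).1 hp.1).1
    have hinj : ∀ (p q : D n × ℕ) (_ : p ∈ (aS ρ C A) ×ˢ Finset.range 3)
        (_ : q ∈ (aS ρ C A) ×ˢ Finset.range 3),
        (facePerm ρ ^ p.2) p.1 = (facePerm ρ ^ q.2) q.1 → p = q := by
      intro p q hp hq h
      rw [Finset.mem_product] at hp hq
      have hface : faceOf ρ p.1 = faceOf ρ q.1 := by
        have h2 := congrArg (faceOf ρ) h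
        rwa [faceOf_facePerm_pow, faceOf_facePerm_pow] at h2
      have h1 : p.1 = q.1 := aS_face_inj ρ C A hs hp.1 hq.1 hface
      rw [h1] at h
      exact Prod.ext h1 (pow_lt3_inj ρ hρ hs q.1 (Finset.mem_range.1 hp.2)
        (Finset.mem_range.1 hq.2) h)
    have hdA : d ∈ ASet ρ A := by
      simp only [ASet, Finset.mem_filter, Finset.mem_univ, true_and]
      exact hd
    obtain ⟨p, hp, hpd⟩ := Finset.surj_on_of_inj_on_of_card_le
      (f := fun (p : D n × ℕ) (_ : p ∈ (aS ρ C A) ×ˢ Finset.range 3) => (facePerm ρ ^ p.2) p.1)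
      hmem hinj hcardle d hdA
    rw [Finset.mem_product] at hp
    exact ⟨p.1, hp.1, p.2, Finset.mem_range.1 hp.2, hpd.symm⟩
  -- (E6) φ³ = 1 on aS
  have hpow3 : ∀ e ∈ aS ρ C A, (facePerm ρ ^ 3) e = e := by
    intro e he
    have hd3 : faceOf ρ ((facePerm ρ ^ 3) e) ∈ A := by
      rw [faceOf_facePerm_pow]
      exact ((haSmem e).1 he).1
    obtain ⟨e', he', k, hk, hke⟩ := hsurj _ hd3
    have hface : faceOf ρ e' = faceOf ρ e := by
      have h1 := congrArg (faceOf ρ) hke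
      rwa [faceOf_facePerm_pow, faceOf_facePerm_pow] at h1
    have hee : e' = e := aS_face_inj ρ C A hs he' he hface
    subst hee
    rcases Nat.eq_zero_or_pos k with hk0 | hkpos
    · subst hk0
      rw [pow_zero, Equiv.Perm.one_apply] at hke
      exact hke.symm
    · exfalso
      have hx : (facePerm ρ ^ (3 - k)) ((facePerm ρ ^ k) e') = (facePerm ρ ^ k) e' := by
        rw [← Equiv.Perm.mul_apply, ← pow_add, Nat.sub_add_cancel (le_of_lt hk)]
        exact hke.symm
      have h3 := pow_fix_lt3 ρ hρ hs _ (j := 3 - k) (by omega) hx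
      omega
  -- snd of φ² e is fst of e
  have hsnd2 : ∀ e ∈ aS ρ C A, ((facePerm ρ ^ 2) e).snd = e.fst := by
    intro e he
    have h1 : (facePerm ρ ((facePerm ρ ^ 2) e)).fst = ((facePerm ρ ^ 2) e).snd :=
      fst_facePerm hρ _
    have h2 : facePerm ρ ((facePerm ρ ^ 2) e) = e := by
      rw [← Equiv.Perm.mul_apply, ← pow_succ']
      exact hpow3 e he
    rw [h2] at h1
    exact h1.symm
  -- (E7) the pairing: for each e in aS there is e' in aS with φ e' = (φ e).symm
  have hJex : ∀ e ∈ aS ρ C A, ∃ e', e' ∈ aS ρ C A ∧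
      facePerm ρ e' = (facePerm ρ e).symm := by
    intro e he
    obtain ⟨heA, heC⟩ := (haSmem e).1 he
    have hfeA : faceOf ρ (facePerm ρ e) ∈ A := by rw [faceOf_facePerm]; exact heA
    have hnotC : faceOf ρ (facePerm ρ e).symm ≠ C := by
      intro hcc
      have hfe : facePerm ρ e ∈ aS ρ C A := (haSmem _).2 ⟨hfeA, hcc⟩
      have heq := aS_face_inj ρ C A hs hfe he (by rw [faceOf_facePerm])
      exact facePerm_ne hρ e heq
    have hd'A : faceOf ρ (facePerm ρ e).symm ∈ A := hclosed (facePerm ρ e) hfeA hnotC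
    obtain ⟨e', he', k, hk, hke⟩ := hsurj _ hd'A
    interval_cases k
    · -- k = 0 : impossible
      exfalso
      rw [pow_zero, Equiv.Perm.one_apply] at hke
      obtain ⟨he'A, he'C⟩ := (haSmem e').1 he'
      rw [hke] at he'C
      rw [SimpleGraph.Dart.symm_symm] at he'C
      rw [faceOf_facePerm] at he'C
      exact hCA (he'C ▸ heA)
    · -- k = 1 : this is the pairing
      rw [pow_one] at hke
      exact ⟨e', he', hke⟩
    · -- k = 2 : impossible, three interior darts would leave one vertex
      exfalso
      obtain ⟨he'A, he'C⟩ := (haSmem e').1 he'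
      -- coordinates
      have hfst' : e'.fst = e.snd := by
        have h1 : ((facePerm ρ ^ 2) e').snd = e'.fst := hsnd2 e' he'
        have h2 : ((facePerm ρ ^ 2) e').snd = (facePerm ρ e).fst := by
          rw [hke]; rfl
        rw [fst_facePerm hρ e] at h2
        rw [h2] at h1
        exact h1.symm
      set z : Fin n := (facePerm ρ e).snd with hz
      -- the three darts
      set u1 : D n := (facePerm ρ ^ 2) e with hu1
      set u2 : D n := (facePerm ρ e).symm with hu2
      set u3 : D n := (facePerm ρ e').symm with hu3
      have hu1fst : u1.fst = z := by
        rw [hu1, pow_two, Equiv.Perm.mul_apply]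
        exact fst_facePerm hρ _
      have hu2fst : u2.fst = z := rfl
      have hu3fst : u3.fst = z := by
        have h1 : ((facePerm ρ ^ 2) e').fst = (facePerm ρ e').snd := by
          rw [pow_two, Equiv.Perm.mul_apply]
          exact fst_facePerm hρ _
        rw [hke] at h1
        have h2 : (facePerm ρ e).symm.fst = z := rfl
        rw [h2] at h1
        exact h1.symm
      -- u1 is interior
      have hu1A : faceOf ρ u1 ∈ A := by rw [hu1, faceOf_facePerm_pow]; exact heA
      have hu1sA : faceOf ρ u1.symm ∈ A := by
        have hne2 : faceOf ρ u1.symm ≠ C := by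
          intro hcc
          have hm : u1 ∈ aS ρ C A := (haSmem _).2 ⟨hu1A, hcc⟩
          have heq := aS_face_inj ρ C A hs hm he (by rw [hu1, faceOf_facePerm_pow])
          rw [hu1, pow_two, Equiv.Perm.mul_apply] at heq
          exact facePerm_sq_ne hρ hs e heq
        exact hclosed u1 hu1A hne2
      -- u2 is interior
      have hu2A : faceOf ρ u2 ∈ A := hd'A
      have hu2sA : faceOf ρ u2.symm ∈ A := by
        rw [hu2, SimpleGraph.Dart.symm_symm, faceOf_facePerm]
        exact heA
      -- u3 is interior
      have hu3A : faceOf ρ u3 ∈ A := by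
        have hfeA' : faceOf ρ (facePerm ρ e') ∈ A := by rw [faceOf_facePerm]; exact he'A
        have hne3 : faceOf ρ (facePerm ρ e').symm ≠ C := by
          intro hcc
          have hm : facePerm ρ e' ∈ aS ρ C A := (haSmem _).2 ⟨hfeA', hcc⟩
          have heq := aS_face_inj ρ C A hs hm he' (by rw [faceOf_facePerm])
          exact facePerm_ne hρ e' heq
        exact hclosed (facePerm ρ e') hfeA' hne3
      have hu3sA : faceOf ρ u3.symm ∈ A := by
        rw [hu3, SimpleGraph.Dart.symm_symm, faceOf_facePerm]
        exact he'A
      -- distinctness via snd coordinates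
      have hu1snd : u1.snd = e.fst := hsnd2 e he
      have hu2snd : u2.snd = e.snd := fst_facePerm hρ e
      have hu3snd : u3.snd = e'.snd := fst_facePerm hρ e'
      have h12 : u1 ≠ u2 := by
        intro h
        have := congrArg (fun d : D n => d.snd) h
        rw [hu1snd, hu2snd] at this
        exact dart_fst_ne_snd e this
      have h23 : u2 ≠ u3 := by
        intro h
        have := congrArg (fun d : D n => d.snd) h
        rw [hu2snd, hu3snd] at this
        exact dart_fst_ne_snd e' (hfst'.trans this)
      have h13 : u1 ≠ u3 := by
        intro h
        have h2 := congrArg (fun d : D n => d.snd) h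
        rw [hu1snd, hu3snd] at h2
        -- then e' = e.symm, contradicting C ∉ A
        have hes : e' = e.symm := dart_ext (by rw [hfst']; rfl) (by rw [← h2]; rfl)
        rw [hes] at he'A
        exact hCA (heC ▸ he'A)
      -- three distinct elements of the interior filter at z
      have hzSA : z ∈ SAset ρ A := by
        have := fst_mem_SA ρ A hu2A
        rwa [hu2fst] at this
      have hmem3 : ∀ u : D n, u ∈ ({u1, u2, u3} : Finset (D n)) →
          u ∈ (DintS ρ A).filter (fun d => d.fst = z) := by
        intro u hu
        simp only [Finset.mem_insert, Finset.mem_singleton] at hu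
        simp only [DintS, Finset.mem_filter, Finset.mem_univ, true_and]
        rcases hu with rfl | rfl | rfl
        · exact ⟨⟨hu1A, hu1sA⟩, hu1fst⟩
        · exact ⟨⟨hu2A, hu2sA⟩, hu2fst⟩
        · exact ⟨⟨hu3A, hu3sA⟩, hu3fst⟩
      have hcard3 : ({u1, u2, u3} : Finset (D n)).card = 3 := by
        rw [Finset.card_insert_of_notMem (by simp [h12, h13]),
          Finset.card_insert_of_notMem (by simp [h23]), Finset.card_singleton]
      have hle := Finset.card_le_card (fun u hu => hmem3 u hu)
      rw [hcard3] at hle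
      have := hInt2 z hzSA
      omega
  -- (E8) the involution and the parity contradiction
  choose! J hJmem hJeq using hJex
  have hJinv : ∀ e ∈ aS ρ C A, J (J e) = e := by
    intro e he
    have h1 := hJeq e he
    have h2 := hJeq (J e) (hJmem e he)
    rw [h1, SimpleGraph.Dart.symm_symm] at h2
    exact (facePerm ρ).injective h2
  have hJne : ∀ e ∈ aS ρ C A, J e ≠ e := by
    intro e he h
    have h1 := hJeq e he
    rw [h] at h1
    exact symm_ne (facePerm ρ e) h1.symm
  have heven := even_card_of_involution (aS ρ C A).card (aS ρ C A) J rfl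
    (fun x hx => hJmem x hx) hJinv hJne
  rw [h_a] at heven
  obtain ⟨k, hk⟩ := heven
  omega

end DualSepProof

open DualSep DualSepProof in
theorem stmt2' (n : ℕ) (hn : 9 ≤ n)
    (ρ : Equiv.Perm (⊤ : SimpleGraph (Fin n)).Dart)
    (hρ : IsRotationSystem ⊤ ρ) (hsimple : DualSimple ρ)
    (C : Set (⊤ : SimpleGraph (Fin n)).Dart) (hC : IsCutface ρ C) :
    15 ≤ C.ncard := by
  classical
  obtain ⟨A, ⟨d₀, hd₀⟩, hCA, hclosed, hnp⟩ := exists_good_class ρ C hρ hsimple hn hC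
  -- rewrite the cardinality of C
  have hCmem : ∀ d : D n, d ∈ C ↔ faceOf ρ d = C := by
    obtain ⟨c, hc⟩ := hC.1
    intro d
    rw [← hc]
    exact mem_faceOf_iff_faceOf_eq
  have hCset : C = ↑(CSet ρ C) := by
    ext d
    simp only [CSet, Finset.coe_filter, Finset.mem_univ, true_and, Set.mem_setOf_eq]
    exact hCmem d
  rw [hCset, Set.ncard_coe_finset]
  by_contra hlt
  push_neg at hlt
  -- names
  have f1 : (CSet ρ C).card = (aS ρ C A).card + (bS ρ C A).card := ell_split ρ C A hsimple
  have f2 : (bS ρ C A).card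
      = (∑ v ∈ SAset ρ A, ((bS ρ C A).filter (fun d => d.fst = v)).card)
        + ((bS ρ C A).filter (fun d => d.fst ∉ SAset ρ A)).card := bS_card_sum ρ C A
  have f3 : (SAset ρ A).card ≤ (aS ρ C A).card := by
    rw [aS_card_sum ρ C A]
    calc (SAset ρ A).card = ∑ _v ∈ SAset ρ A, 1 := by simp
    _ ≤ _ := Finset.sum_le_sum (fun v hv => alpha_pos ρ C A hρ hclosed hv (hnp v))
  have f4 : (SAset ρ A).card
      ≤ ∑ v ∈ SAset ρ A, ((bS ρ C A).filter (fun d => d.fst = v)).card := by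
    calc (SAset ρ A).card = ∑ _v ∈ SAset ρ A, 1 := by simp
    _ ≤ _ := Finset.sum_le_sum (fun v hv => beta_pos ρ C A hρ hclosed hv (hnp v))
  have f5' : (ASet ρ A).card = (DintS ρ A).card + (aS ρ C A).card := AS_split ρ C A hCA hclosed
  have f5'' : 3 * (aS ρ C A).card ≤ (ASet ρ A).card := three_a_le_AS ρ C A hρ hsimple
  have f6 : 2 * (aS ρ C A).card ≤ (CWS ρ C A).card := two_a_le_CW ρ C A hρ hCA
  have f78 : (DintS ρ A).card + (CWS ρ C A).card ≤ (SSdarts ρ A).card :=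
    Dint_CW_bound ρ C A hρ hCA
  have f8 : (SSdarts ρ A).card = (SAset ρ A).card * (SAset ρ A).card - (SAset ρ A).card :=
    SS_card ρ A
  have f9 : ((SymCS ρ C).filter (fun d => d.fst ∈ SAset ρ A)).card
      = 2 * ((aS ρ C A).card
          + ∑ v ∈ SAset ρ A, ((bS ρ C A).filter (fun d => d.fst = v)).card) :=
    X_eq ρ C A hρ hsimple
  have f10 : ((SymCS ρ C).filter (fun d => d.fst ∈ SAset ρ A)).card
      = (CWS ρ C A).card
        + ((SymCS ρ C).filter (fun d => d.fst ∈ SAset ρ A ∧ d.snd ∉ SAset ρ A)).card :=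
    X_split ρ C A
  have f11 : ((SymCS ρ C).filter (fun d => d.fst ∈ SAset ρ A ∧ d.snd ∉ SAset ρ A)).card
      ≤ ((SymCS ρ C).filter (fun d => d.fst ∉ SAset ρ A)).card := Y1_le_Z ρ C A
  have f12 : ((SymCS ρ C).filter (fun d => d.fst ∉ SAset ρ A)).card
      = 2 * ((bS ρ C A).filter (fun d => d.fst ∉ SAset ρ A)).card := Z_eq ρ C A hρ hsimple
  have f13 : 1 ≤ (SAset ρ A).card :=
    Finset.card_pos.2 ⟨d₀.fst, fst_mem_SA ρ A hd₀⟩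
  -- bound s ≤ 7
  have hs7 : (SAset ρ A).card ≤ 7 := by omega
  -- case analysis on s
  obtain ⟨s, hseq⟩ : ∃ m, (SAset ρ A).card = m := ⟨_, rfl⟩
  rw [hseq] at f3 f4 f8 f13 hs7
  interval_cases s
  · omega
  · omega
  · omega
  · omega
  · omega
  · omega
  · -- s = 7 : the endgame
    apply s7_contradiction ρ C A hρ hsimple hCA hclosed hseq (by omega) (by omega) ?_ ?_ (by omega)
    · -- every alpha_v = 1
      refine sum_eq_one_of_sum_eq_card (SAset ρ A) _
        (fun v hv => alpha_pos ρ C A hρ hclosed hv (hnp v)) ?_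
      rw [← aS_card_sum ρ C A, hseq]
      omega
    · refine sum_eq_one_of_sum_eq_card (SAset ρ A) _
        (fun v hv => beta_pos ρ C A hρ hclosed hv (hnp v)) ?_
      rw [hseq]
      omega

open DualSep in
/-- Theorem 2 of Brinkmann–Noguchi–Van den Camp: in an embedding of a complete graph
`K_n`, `n ≥ 9`, with a simple dual, any cutface has length at least 15. -/
theorem stmt2 (n : ℕ) (hn : 9 ≤ n)
    (ρ : Equiv.Perm (⊤ : SimpleGraph (Fin n)).Dart)
    (hρ : IsRotationSystem ⊤ ρ) (hsimple : DualSimple ρ)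
    (C : Set (⊤ : SimpleGraph (Fin n)).Dart) (hC : IsCutface ρ C) :
    15 ≤ C.ncard :=
  stmt2' n hn ρ hρ hsimple C hC
end

section
/- Let c ≥ 8, let G be a finite connected simple graph with minimum degree at least c, and let ρ be a rotation system on G whose dual graph is simple and which has a cutface of length at least 15. Then the genus of (G,ρ) is at least ⌈(c−2)(c−3)/12⌉ + 2. -/
section Aux

open DualSep SimpleGraph

variable {V : Type*} [Fintype V] [DecidableEq V] {G : SimpleGraph V}

lemma DualSep.faceOf_eq_faceOf_iff (ρ : Equiv.Perm G.Dart) {d d' : G.Dart} :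
    faceOf ρ d = faceOf ρ d' ↔ (facePerm ρ).SameCycle d d' := by
  constructor
  · intro h
    have hd' : d' ∈ faceOf ρ d' := Equiv.Perm.SameCycle.refl _ _
    rw [← h] at hd'
    exact hd'
  · intro h
    ext e
    exact ⟨fun he => h.symm.trans he, fun he => h.trans he⟩

lemma DualSep.facePerm_fst (ρ : Equiv.Perm G.Dart) (hρ : IsRotationSystem G ρ)
    (e : G.Dart) : (facePerm ρ e).fst = e.snd :=
  hρ.fst_fixed e.symm

lemma DualSep.three_le_faceOf_ncard (ρ : Equiv.Perm G.Dart) (hρ : IsRotationSystem G ρ)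
    (h1 : ∀ d : G.Dart, faceOf ρ d ≠ faceOf ρ d.symm) (d : G.Dart) :
    3 ≤ (faceOf ρ d).ncard := by
  set φ := facePerm ρ with hφdef
  have hfst : ∀ e : G.Dart, (φ e).fst = e.snd := facePerm_fst ρ hρ
  have hne1 : φ d ≠ d := by
    intro h
    exact d.snd_ne_fst (by rw [← hfst d, h])
  have : Finite G.Dart := Finite.of_injective _ Dart.toProd_injective
  by_cases h2 : φ (φ d) = d
  · exfalso
    have he : φ d = d.symm := by
      apply Dart.ext
      apply Prod.ext
      · exact hfst d
      · have h3 := hfst (φ d)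
        rw [h2] at h3
        exact h3.symm
    exact h1 d ((faceOf_eq_faceOf_iff ρ).mpr ⟨1, by rw [zpow_one, ← hφdef, he]⟩)
  · have hd2 : φ (φ d) ≠ φ d := fun h => hne1 (φ.injective h)
    have hsub : ({d, φ d, φ (φ d)} : Set G.Dart) ⊆ faceOf ρ d := by
      intro e he
      simp only [Set.mem_insert_iff, Set.mem_singleton_iff] at he
      rcases he with rfl | rfl | rfl
      · exact ⟨0, by simp⟩
      · exact ⟨1, by rw [zpow_one]⟩
      · exact ⟨2, by rw [zpow_two, Equiv.Perm.mul_apply]⟩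
    have hcard : ({d, φ d, φ (φ d)} : Set G.Dart).ncard = 3 := by
      rw [Set.ncard_insert_of_notMem (by
            simp only [Set.mem_insert_iff, Set.mem_singleton_iff]
            push_neg
            exact ⟨Ne.symm hne1, Ne.symm h2⟩),
          Set.ncard_insert_of_notMem (by
            simp only [Set.mem_singleton_iff]
            exact Ne.symm hd2),
          Set.ncard_singleton]
    calc 3 = ({d, φ d, φ (φ d)} : Set G.Dart).ncard := hcard.symm
      _ ≤ (faceOf ρ d).ncard := Set.ncard_le_ncard hsub (Set.toFinite _)

end Aux

open DualSep in
/-- If a connected graph of minimum degree at least `c ≥ 8` has an embedding with a simple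
dual and a cutface of length at least 15, then its genus is at least
`⌈(c-2)(c-3)/12⌉ + 2`. -/
theorem stmt4 {V : Type*} [Fintype V] [DecidableEq V] (G : SimpleGraph V)
    (hconn : G.Connected) (c : ℕ) (hc : 8 ≤ c)
    (hdeg : ∀ v : V, c ≤ (G.neighborSet v).ncard)
    (ρ : Equiv.Perm G.Dart) (hρ : IsRotationSystem G ρ) (hsimple : DualSimple ρ)
    (C : Set G.Dart) (hC : IsCutface ρ C) (hClen : 15 ≤ C.ncard)
    (g : ℤ)
    (hEuler : (Fintype.card V : ℤ) - (G.edgeSet.ncard : ℤ) + ((faces ρ).ncard : ℤ)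
      = 2 - 2 * g) :
    g ≥ ⌈(((c : ℚ) - 2) * ((c : ℚ) - 3)) / 12⌉ + 2 := by
  classical
  open SimpleGraph in
  -- the faces as a finset
  have hfacesFin : (faces ρ).Finite := Set.toFinite _
  set S : Finset (Set G.Dart) := hfacesFin.toFinset with hSdef
  have hSmem : ∀ F, F ∈ S ↔ F ∈ faces ρ := fun F => hfacesFin.mem_toFinset
  have hfaces_card : (faces ρ).ncard = S.card := Set.ncard_eq_toFinset_card _ hfacesFin
  -- dart count
  have hdart : Fintype.card G.Dart = 2 * G.edgeFinset.card := G.dart_card_eq_twice_card_edges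
  have hedge : G.edgeSet.ncard = G.edgeFinset.card := Set.ncard_eq_toFinset_card' _
  -- the faces partition the darts
  have hfiber : Fintype.card G.Dart
      = ∑ F ∈ S, (Finset.univ.filter (fun d => faceOf ρ d = F)).card := by
    rw [← Finset.card_univ]
    exact Finset.card_eq_sum_card_fiberwise (fun d _ => (hSmem _).mpr ⟨d, rfl⟩)
  have hfiber_eq : ∀ F ∈ S, (Finset.univ.filter (fun d => faceOf ρ d = F)).card = F.ncard := by
    intro F hF
    obtain ⟨d0, rfl⟩ := (hSmem F).mp hF
    rw [Set.ncard_eq_toFinset_card']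
    congr 1
    ext e
    simp only [Finset.mem_filter, Finset.mem_univ, true_and, Set.mem_toFinset]
    rw [faceOf_eq_faceOf_iff]
    constructor
    · intro h
      exact h.symm
    · intro h
      exact Equiv.Perm.SameCycle.symm h
  have hDsum : Fintype.card G.Dart = ∑ F ∈ S, F.ncard := by
    rw [hfiber]
    exact Finset.sum_congr rfl hfiber_eq
  -- lower bound the total face length
  have hCS : C ∈ S := (hSmem C).mpr hC.1
  have hbound : 12 + 3 * S.card ≤ Fintype.card G.Dart := by
    have h3 : ∀ F ∈ S.erase C, 3 ≤ F.ncard := by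
      intro F hF
      obtain ⟨d0, rfl⟩ := (hSmem F).mp (Finset.mem_of_mem_erase hF)
      exact three_le_faceOf_ncard ρ hρ hsimple.1 d0
    have hsum3 : (S.erase C).card • 3 ≤ ∑ F ∈ S.erase C, F.ncard :=
      Finset.card_nsmul_le_sum _ _ _ h3
    rw [Finset.card_erase_of_mem hCS, smul_eq_mul] at hsum3
    have heq : C.ncard + ∑ F ∈ S.erase C, F.ncard = ∑ F ∈ S, F.ncard :=
      Finset.add_sum_erase S Set.ncard hCS
    have hpos : 1 ≤ S.card := Finset.card_pos.mpr ⟨C, hCS⟩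
    rw [hDsum]
    omega
  -- degree-sum bound
  have hdegsum : c * Fintype.card V ≤ 2 * G.edgeFinset.card := by
    rw [← G.sum_degrees_eq_twice_card_edges]
    have h := Finset.card_nsmul_le_sum Finset.univ (fun v => G.degree v) c
      (fun v _ => by
        have h1 := hdeg v
        rwa [Set.ncard_eq_toFinset_card', Set.toFinset_card,
          card_neighborSet_eq_degree] at h1)
    rwa [smul_eq_mul, Finset.card_univ, mul_comm] at h
  -- vertex count bound
  have hV : c + 1 ≤ Fintype.card V := by
    obtain ⟨v⟩ := hconn.nonempty
    have h1 : (insert v (G.neighborFinset v)).card ≤ Fintype.card V := by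
      rw [← Finset.card_univ]
      exact Finset.card_le_card (Finset.subset_univ _)
    rw [Finset.card_insert_of_notMem (G.notMem_neighborFinset_self v)] at h1
    have h2 : c ≤ G.degree v := by
      have h1' := hdeg v
      rwa [Set.ncard_eq_toFinset_card', Set.toFinset_card,
        card_neighborSet_eq_degree] at h1'
    have h2' : c ≤ (G.neighborFinset v).card := h2
    omega
  -- integer arithmetic
  have key : ((c : ℤ) - 2) * ((c : ℤ) - 3) + 24 ≤ 12 * g := by
    have e1 : (12 : ℤ) + 3 * (faces ρ).ncard ≤ 2 * G.edgeSet.ncard := by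
      rw [hfaces_card, hedge]
      exact_mod_cast hbound.trans_eq hdart
    have e2 : (c : ℤ) * Fintype.card V ≤ 2 * G.edgeSet.ncard := by
      rw [hedge]
      exact_mod_cast hdegsum
    have e3 : (c : ℤ) + 1 ≤ Fintype.card V := by exact_mod_cast hV
    have e4 : (8 : ℤ) ≤ c := by exact_mod_cast hc
    have e5 : (0 : ℤ) ≤ (faces ρ).ncard := Int.natCast_nonneg _
    nlinarith [mul_nonneg (by linarith : (0:ℤ) ≤ (c:ℤ) - 6)
      (by linarith : (0:ℤ) ≤ (Fintype.card V : ℤ) - ((c:ℤ) + 1))]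
  have hceil : (⌈(((c : ℚ) - 2) * ((c : ℚ) - 3)) / 12⌉ : ℤ) ≤ g - 2 := by
    rw [Int.ceil_le]
    have hq : ((c : ℚ) - 2) * ((c : ℚ) - 3) + 24 ≤ 12 * (g : ℚ) := by exact_mod_cast key
    push_cast
    linarith
  linarith
end
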